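/- Let X be a compact geodesic space that is semi-locally simply connected, with basepoint •. Then every element of π₁(X, •) has a representative loop of finite length; moreover, for every non-nullhomotopic class there is a representative of minimal length among all rectifiable representatives, and this minimal length is strictly positive. -/

import Mathlib

attribute [local instance] Path.Homotopic.setoid

open Set unitInterval

/-- The length of a path in a metric space, as its total variation. -/
noncomputable def pathLength {X : Type*} [MetricSpace X] {a b : X} (γ : Path a b) : ENNReal :=
  eVariationOn (fun t : ℝ => γ (Set.projIcc 0 1 zero_le_one t)) (Set.Icc 0 1)

namespace Stmt14Aux

variable {X : Type*} [MetricSpace X] {a b c x y : X}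

section QuotAlg

variable {a b c x y : X}

lemma quot_trans_congr {p p' : Path a b} {q q' : Path b c}
    (hp : (⟦p⟧ : Path.Homotopic.Quotient a b) = ⟦p'⟧)
    (hq : (⟦q⟧ : Path.Homotopic.Quotient b c) = ⟦q'⟧) :
    (⟦p.trans q⟧ : Path.Homotopic.Quotient a c) = ⟦p'.trans q'⟧ :=
  Quotient.sound (Path.Homotopic.hcomp (Quotient.exact hp) (Quotient.exact hq))

lemma quot_assoc (p : Path a b) (q : Path b c) {d : X} (r : Path c d) :
    (⟦(p.trans q).trans r⟧ : Path.Homotopic.Quotient a d) = ⟦p.trans (q.trans r)⟧ :=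
  Quotient.sound ⟨Path.Homotopy.transAssoc p q r⟩

lemma quot_refl_trans (p : Path a b) :
    (⟦(Path.refl a).trans p⟧ : Path.Homotopic.Quotient a b) = ⟦p⟧ :=
  Quotient.sound ⟨Path.Homotopy.reflTrans p⟩

lemma quot_trans_refl (p : Path a b) :
    (⟦p.trans (Path.refl b)⟧ : Path.Homotopic.Quotient a b) = ⟦p⟧ :=
  Quotient.sound ⟨Path.Homotopy.transRefl p⟩

lemma quot_trans_symm (p : Path a b) :
    (⟦p.trans p.symm⟧ : Path.Homotopic.Quotient a a) = ⟦Path.refl a⟧ :=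
  Quotient.sound ⟨(Path.Homotopy.reflTransSymm p).symm⟩

lemma quot_symm_trans (p : Path a b) :
    (⟦p.symm.trans p⟧ : Path.Homotopic.Quotient b b) = ⟦Path.refl b⟧ :=
  Quotient.sound ⟨(Path.Homotopy.reflSymmTrans p).symm⟩

lemma quot_cancel {p q : Path a b}
    (h : (⟦p.trans q.symm⟧ : Path.Homotopic.Quotient a a) = ⟦Path.refl a⟧) :
    (⟦p⟧ : Path.Homotopic.Quotient a b) = ⟦q⟧ := by
  calc (⟦p⟧ : Path.Homotopic.Quotient a b)
      = ⟦p.trans (Path.refl b)⟧ := (quot_trans_refl p).symm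
    _ = ⟦p.trans (q.symm.trans q)⟧ := quot_trans_congr rfl (quot_symm_trans q).symm
    _ = ⟦(p.trans q.symm).trans q⟧ := (quot_assoc _ _ _).symm
    _ = ⟦(Path.refl a).trans q⟧ := quot_trans_congr h rfl
    _ = ⟦q⟧ := quot_refl_trans q

/-- conjugation: if `λ (θ λ⁻¹)` is nullhomotopic then `θ` is. -/
lemma quot_conj {l : Path x y} {θ : Path y y}
    (h : (⟦l.trans (θ.trans l.symm)⟧ : Path.Homotopic.Quotient x x) = ⟦Path.refl x⟧) :
    (⟦θ⟧ : Path.Homotopic.Quotient y y) = ⟦Path.refl y⟧ := by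
  have hA : (⟦l.symm.trans (l.trans (θ.trans l.symm))⟧ : Path.Homotopic.Quotient y x)
      = ⟦θ.trans l.symm⟧ := by
    rw [← quot_assoc]
    calc (⟦(l.symm.trans l).trans (θ.trans l.symm)⟧ : Path.Homotopic.Quotient y x)
        = ⟦(Path.refl y).trans (θ.trans l.symm)⟧ :=
          quot_trans_congr (quot_symm_trans l) rfl
      _ = ⟦θ.trans l.symm⟧ := quot_refl_trans _
  have hA' : (⟦l.symm.trans (l.trans (θ.trans l.symm))⟧ : Path.Homotopic.Quotient y x)
      = ⟦l.symm⟧ := by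
    calc (⟦l.symm.trans (l.trans (θ.trans l.symm))⟧ : Path.Homotopic.Quotient y x)
        = ⟦l.symm.trans (Path.refl x)⟧ := quot_trans_congr rfl h
      _ = ⟦l.symm⟧ := quot_trans_refl _
  have hB : (⟦θ.trans l.symm⟧ : Path.Homotopic.Quotient y x) = ⟦l.symm⟧ := hA ▸ hA'
  have := quot_trans_congr hB (rfl : (⟦l⟧ : Path.Homotopic.Quotient x y) = ⟦l⟧)
  calc (⟦θ⟧ : Path.Homotopic.Quotient y y)
      = ⟦θ.trans (Path.refl y)⟧ := (quot_trans_refl θ).symm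
    _ = ⟦θ.trans (l.symm.trans l)⟧ := quot_trans_congr rfl (quot_symm_trans l).symm
    _ = ⟦(θ.trans l.symm).trans l⟧ := (quot_assoc _ _ _).symm
    _ = ⟦l.symm.trans l⟧ := this
    _ = ⟦Path.refl y⟧ := quot_symm_trans l

/-- every value of a concatenation is a value of one of the pieces -/
lemma trans_values (p : Path a b) (q : Path b c) (t : I) :
    (∃ s, (p.trans q) t = p s) ∨ (∃ s, (p.trans q) t = q s) := by
  rw [Path.trans_apply]
  split
  · exact Or.inl ⟨_, rfl⟩
  · exact Or.inr ⟨_, rfl⟩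

end QuotAlg


lemma pathLength_eq_extend (γ : Path a b) :
    pathLength γ = eVariationOn γ.extend (Icc 0 1) := rfl

lemma edist_le_pathLength (γ : Path a b) {s t : ℝ} (hs : s ∈ Icc (0:ℝ) 1)
    (ht : t ∈ Icc (0:ℝ) 1) : edist (γ.extend s) (γ.extend t) ≤ pathLength γ :=
  eVariationOn.edist_le _ hs ht

lemma pathLength_trans (p : Path a b) (q : Path b c) :
    pathLength (p.trans q) = pathLength p + pathLength q := by
  have h2 : (1:ℝ)/2 ∈ Icc (0:ℝ) 1 := by norm_num
  have key := eVariationOn.Icc_add_Icc (s := (univ : Set ℝ)) (p.trans q).extend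
    (by norm_num : (0:ℝ) ≤ 1/2) (by norm_num : (1:ℝ)/2 ≤ 1) (mem_univ _)
  simp only [univ_inter] at key
  have hL : eVariationOn (p.trans q).extend (Icc 0 (1/2)) = pathLength p := by
    have heq : EqOn (p.trans q).extend (p.extend ∘ (fun u : ℝ => 2*u)) (Icc 0 (1/2)) := by
      intro u hu
      have hu1 : u ∈ Icc (0:ℝ) 1 := ⟨hu.1, hu.2.trans (by norm_num)⟩
      have h2u : 2*u ∈ Icc (0:ℝ) 1 := ⟨by linarith [hu.1], by linarith [hu.2]⟩
      show (p.trans q).extend u = p.extend (2*u)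
      rw [Path.extend_apply _ hu1, Path.extend_apply _ h2u, Path.trans_apply,
        dif_pos (show ((⟨u, hu1⟩:I):ℝ) ≤ 1/2 from hu.2)]
    rw [eVariationOn.eq_of_eqOn heq,
      eVariationOn.comp_eq_of_monotoneOn _ _ ((monotone_mul_left_of_nonneg
        (by norm_num : (0:ℝ) ≤ 2)).monotoneOn _)]
    have himg : (fun u : ℝ => 2*u) '' Icc 0 (1/2) = Icc (0:ℝ) 1 := by
      ext z
      constructor
      · rintro ⟨t, ht, rfl⟩
        exact ⟨by simpa using (by linarith [ht.1] : (0:ℝ) ≤ 2*t),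
          by simpa using (by linarith [ht.2] : 2*t ≤ (1:ℝ))⟩
      · intro hz
        exact ⟨z/2, ⟨by linarith [hz.1], by linarith [hz.2]⟩, by ring⟩
    rw [himg, pathLength_eq_extend]
  have hR : eVariationOn (p.trans q).extend (Icc (1/2) 1) = pathLength q := by
    have heq : EqOn (p.trans q).extend (q.extend ∘ (fun u : ℝ => 2*u - 1)) (Icc (1/2) 1) := by
      intro u hu
      have hu1 : u ∈ Icc (0:ℝ) 1 := ⟨le_trans (by norm_num) hu.1, hu.2⟩
      have h2u : 2*u - 1 ∈ Icc (0:ℝ) 1 := ⟨by linarith [hu.1], by linarith [hu.2]⟩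
      show (p.trans q).extend u = q.extend (2*u - 1)
      rw [Path.extend_apply _ hu1, Path.extend_apply _ h2u, Path.trans_apply]
      rcases eq_or_lt_of_le hu.1 with h | h
      · rw [dif_pos (show ((⟨u, hu1⟩:I):ℝ) ≤ 1/2 from le_of_eq h.symm)]
        have hu' : u = 1/2 := h.symm
        have e1 : (⟨2*((⟨u, hu1⟩:I):ℝ), by dsimp; constructor <;> nlinarith [hu1.1]⟩ : I) = 1 := by
          apply Subtype.ext; dsimp; linarith
        have e2 : (⟨2*u - 1, h2u⟩ : I) = 0 := by
          apply Subtype.ext; dsimp; linarith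
        calc p ⟨2*((⟨u, hu1⟩:I):ℝ), _⟩ = p 1 := by rw [e1]
          _ = b := p.target
          _ = q 0 := q.source.symm
          _ = q ⟨2*u - 1, h2u⟩ := by rw [e2]
      · rw [dif_neg (not_le.mpr (show (1:ℝ)/2 < ((⟨u, hu1⟩:I):ℝ) from h))]
    rw [eVariationOn.eq_of_eqOn heq,
      eVariationOn.comp_eq_of_monotoneOn _ _
        ((show Monotone fun u:ℝ => 2*u-1 from fun u v huv => by dsimp only []; linarith).monotoneOn _)]
    have himg : (fun u : ℝ => 2*u - 1) '' Icc (1/2) 1 = Icc (0:ℝ) 1 := by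
      ext z
      constructor
      · rintro ⟨t, ht, rfl⟩
        exact ⟨by simpa using (by linarith [ht.1] : (0:ℝ) ≤ 2*t - 1),
          by simpa using (by linarith [ht.2] : 2*t - 1 ≤ (1:ℝ))⟩
      · intro hz
        exact ⟨(z+1)/2, ⟨by linarith [hz.1], by linarith [hz.2]⟩, by ring⟩
    rw [himg, pathLength_eq_extend]
  rw [pathLength_eq_extend (p.trans q), ← key, hL, hR]

/-- Bundled geodesic data (copy for dev; merged later). -/
structure GeoData (X : Type*) [MetricSpace X] where
  Γ : X → X → ℝ → X
  h0 : ∀ x y, Γ x y 0 = x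
  h1 : ∀ x y, Γ x y (dist x y) = y
  hiso : ∀ x y, ∀ s ∈ Icc 0 (dist x y), ∀ t ∈ Icc 0 (dist x y),
    dist (Γ x y s) (Γ x y t) = |s - t|

namespace GeoData

variable (G : GeoData X)

lemma lipOn (x y : X) : LipschitzOnWith 1 (G.Γ x y) (Icc 0 (dist x y)) := by
  apply LipschitzOnWith.of_dist_le_mul
  intro s hs t ht
  rw [G.hiso x y s hs t ht, NNReal.coe_one, one_mul, Real.dist_eq]

noncomputable def geo (x y : X) : Path x y where
  toFun t := G.Γ x y (t * dist x y)
  continuous_toFun := by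
    apply (G.lipOn x y).continuousOn.comp_continuous
      (by continuity : Continuous fun t : I => (t : ℝ) * dist x y)
    intro t
    exact ⟨mul_nonneg t.2.1 dist_nonneg, mul_le_of_le_one_left dist_nonneg t.2.2⟩
  source' := by simp [G.h0]
  target' := by simp [G.h1]

lemma geo_dist (x y : X) (t : I) : dist (G.geo x y t) x ≤ dist x y := by
  have h0 : (0 : ℝ) ∈ Icc 0 (dist x y) := ⟨le_rfl, dist_nonneg⟩
  have ht : (t : ℝ) * dist x y ∈ Icc 0 (dist x y) :=
    ⟨mul_nonneg t.2.1 dist_nonneg, mul_le_of_le_one_left dist_nonneg t.2.2⟩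
  have hh := G.hiso x y _ ht _ h0
  calc dist (G.geo x y t) x
      = dist (G.Γ x y ((t : ℝ) * dist x y)) (G.Γ x y 0) := by rw [G.h0]; rfl
    _ = |(t : ℝ) * dist x y - 0| := hh
    _ ≤ dist x y := by
        rw [sub_zero, abs_of_nonneg (mul_nonneg t.2.1 dist_nonneg)]
        exact mul_le_of_le_one_left dist_nonneg t.2.2

lemma geo_self (x : X) : G.geo x x = Path.refl x := by
  ext t
  show G.Γ x x ((t : ℝ) * dist x x) = x
  simp [G.h0]

lemma pathLength_geo (x y : X) : pathLength (G.geo x y) ≤ edist x y := by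
  classical
  set d := dist x y with hd
  have hd0 : 0 ≤ d := dist_nonneg
  have heq : EqOn (G.geo x y).extend
      ((G.Γ x y) ∘ (fun t : ℝ => ((projIcc 0 1 zero_le_one t : I) : ℝ) * d)) (Icc 0 1) := by
    intro u _
    rfl
  have hmono : MonotoneOn (fun t : ℝ => ((projIcc 0 1 zero_le_one t : I) : ℝ) * d) (Icc 0 1) := by
    intro u _ v _ huv
    exact mul_le_mul_of_nonneg_right (monotone_projIcc zero_le_one huv) hd0
  rw [pathLength_eq_extend, eVariationOn.eq_of_eqOn heq,
    eVariationOn.comp_eq_of_monotoneOn _ _ hmono]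
  have himg : (fun t : ℝ => ((projIcc 0 1 zero_le_one t : I) : ℝ) * d) '' Icc 0 1
      = Icc 0 d := by
    ext z
    constructor
    · rintro ⟨t, ht, rfl⟩
      dsimp only
      rw [projIcc_of_mem _ ht]
      exact ⟨mul_nonneg ht.1 hd0, mul_le_of_le_one_left hd0 ht.2⟩
    · intro hz
      by_cases hzero : d = 0
      · refine ⟨0, ⟨le_rfl, zero_le_one⟩, ?_⟩
        have : z = 0 := le_antisymm (hzero ▸ hz.2) hz.1
        simp [this, hzero]
      · have hdpos : 0 < d := lt_of_le_of_ne hd0 (Ne.symm hzero)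
        refine ⟨z/d, ⟨div_nonneg hz.1 hd0, by rw [div_le_one hdpos]; exact hz.2⟩, ?_⟩
        dsimp only
        rw [projIcc_of_mem _ ⟨div_nonneg hz.1 hd0, by rw [div_le_one hdpos]; exact hz.2⟩]
        field_simp
  rw [himg]
  calc eVariationOn (G.Γ x y) (Icc 0 d)
      = eVariationOn ((G.Γ x y) ∘ id) (Icc 0 d) := rfl
    _ ≤ 1 * eVariationOn id (Icc 0 d) :=
        (G.lipOn x y).comp_eVariationOn_le (mapsTo_id _)
    _ = eVariationOn id (Icc 0 d) := one_mul _
    _ ≤ ENNReal.ofReal (d - 0) := by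
        have := MonotoneOn.eVariationOn_le (f := (id : ℝ → ℝ)) (s := Icc 0 d)
          (monotoneOn_id) (a := 0) (b := d) ⟨le_rfl, hd0⟩ ⟨hd0, le_rfl⟩
        simpa using this
    _ = edist x y := by rw [sub_zero, edist_dist]

end GeoData

section Polygon

variable (G : GeoData X)

/-- piecewise geodesic through the given list of intermediate vertices -/
noncomputable def GeoData.poly (G : GeoData X) : (a : X) → List X → (b : X) → Path a b
  | a, [], b => G.geo a b
  | a, c :: l, b => (G.geo a c).trans (GeoData.poly G c l b)

noncomputable def eSum : X → List X → X → ENNReal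
  | a, [], b => edist a b
  | a, c :: l, b => edist a c + eSum c l b

def dSum : X → List X → X → ℝ
  | a, [], b => dist a b
  | a, c :: l, b => dist a c + dSum c l b

def edgesLt (r : ℝ) : X → List X → X → Prop
  | a, [], b => dist a b < r
  | a, c :: l, b => dist a c < r ∧ edgesLt r c l b

def Reduced (r : ℝ) : X → List X → X → Prop
  | _, [], _ => True
  | a, c :: l, b => r ≤ dist a (l.headD b) ∧ Reduced r c l b

variable {b : X}

@[simp] lemma poly_nil (a : X) : G.poly a [] b = G.geo a b := rfl
@[simp] lemma poly_cons (a c : X) (l : List X) :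
    G.poly a (c :: l) b = (G.geo a c).trans (G.poly c l b) := rfl
@[simp] lemma eSum_nil (a : X) : eSum a ([] : List X) b = edist a b := rfl
@[simp] lemma eSum_cons (a c : X) (l : List X) :
    eSum a (c :: l) b = edist a c + eSum c l b := rfl
@[simp] lemma dSum_nil (a : X) : dSum a ([] : List X) b = dist a b := rfl
@[simp] lemma dSum_cons (a c : X) (l : List X) :
    dSum a (c :: l) b = dist a c + dSum c l b := rfl
@[simp] lemma edgesLt_nil (r : ℝ) (a : X) : edgesLt r a ([] : List X) b ↔ dist a b < r :=
  Iff.rfl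
@[simp] lemma edgesLt_cons (r : ℝ) (a c : X) (l : List X) :
    edgesLt r a (c :: l) b ↔ dist a c < r ∧ edgesLt r c l b := Iff.rfl
@[simp] lemma reduced_nil (r : ℝ) (a : X) : Reduced r a ([] : List X) b := trivial
@[simp] lemma reduced_cons (r : ℝ) (a c : X) (l : List X) :
    Reduced r a (c :: l) b ↔ r ≤ dist a (l.headD b) ∧ Reduced r c l b := Iff.rfl

lemma dSum_nonneg : ∀ (l : List X) (a : X), 0 ≤ dSum a l b
  | [], a => dist_nonneg
  | c :: l, _ => add_nonneg dist_nonneg (dSum_nonneg l c)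

lemma eSum_eq_ofReal_dSum : ∀ (l : List X) (a : X), eSum a l b = ENNReal.ofReal (dSum a l b)
  | [], a => by simp [edist_dist]
  | c :: l, a => by
    rw [eSum_cons, dSum_cons, ENNReal.ofReal_add dist_nonneg (dSum_nonneg l c),
      eSum_eq_ofReal_dSum l c, edist_dist]

lemma eSum_lt_top : ∀ (l : List X) (a : X), eSum a l b < ⊤
  | [], a => edist_lt_top a b
  | c :: l, a => by
    rw [eSum_cons]
    exact ENNReal.add_lt_top.mpr ⟨edist_lt_top _ _, eSum_lt_top l c⟩

lemma pathLength_poly_le : ∀ (l : List X) (a : X), pathLength (G.poly a l b) ≤ eSum a l b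
  | [], a => G.pathLength_geo a b
  | c :: l, a => by
    rw [poly_cons, eSum_cons, pathLength_trans]
    exact add_le_add (G.pathLength_geo a c) (pathLength_poly_le l c)

lemma length_le_of_reduced {r : ℝ} (hr : 0 ≤ r) :
    ∀ (n : ℕ) (l : List X) (a : X), l.length ≤ n → Reduced r a l b →
      (l.length : ℝ) * r ≤ 2 * dSum a l b + r := by
  intro n
  induction n with
  | zero =>
    intro l a hl _
    have : l = [] := List.eq_nil_of_length_eq_zero (Nat.le_zero.mp hl)
    subst this
    have := dSum_nonneg (b := b) [] a
    simp only [List.length_nil, Nat.cast_zero, zero_mul]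
    linarith
  | succ n ih =>
    intro l a hl hred
    match l with
    | [] =>
      have := dSum_nonneg (b := b) ([] : List X) a
      simp only [List.length_nil, Nat.cast_zero, zero_mul]
      linarith
    | [c] =>
      have h1 := dist_nonneg (x := a) (y := c)
      have h2 := dist_nonneg (x := c) (y := b)
      simp only [List.length_cons, List.length_nil, dSum_cons, dSum_nil]
      push_cast
      linarith
    | c :: d :: l =>
      obtain ⟨h1, h2⟩ := hred
      obtain ⟨_, h4⟩ := h2
      have hskip : r ≤ dist a c + dist c d := by
        refine le_trans h1 ?_
        simpa using dist_triangle a c d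
      have ihl : (l.length : ℝ) * r ≤ 2 * dSum d l b + r := by
        refine ih l d ?_ h4
        simp only [List.length_cons] at hl
        omega
      have hd : dSum a (c :: d :: l) b = dist a c + dist c d + dSum d l b := by
        simp [add_assoc]
      have hlen : ((c :: d :: l).length : ℝ) = (l.length : ℝ) + 2 := by
        push_cast [List.length_cons]
        ring
      rw [hlen, hd]
      nlinarith [dSum_nonneg (b := b) l d]

end Polygon

section Small

/-- Bundled "small loops are trivial" data. -/
structure SmallData (X : Type*) [MetricSpace X] where
  ε : ℝ
  pos : 0 < ε
  small : ∀ (u v : X) (α γ : Path u v), (∀ t, dist (α t) u < ε) → (∀ t, dist (γ t) u < ε) →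
    (⟦α⟧ : Path.Homotopic.Quotient u v) = ⟦γ⟧

variable (S : SmallData X) (G : GeoData X)

/-- the mesh size -/
noncomputable def SmallData.e (S : SmallData X) : ℝ := S.ε / 8

lemma SmallData.e_pos : 0 < S.e := by
  have := S.pos
  unfold SmallData.e
  linarith

lemma SmallData.eps_eq : S.ε = 8 * S.e := by unfold SmallData.e; ring

lemma trans_geo_dist {u v w : X} (t : I) :
    dist (((G.geo u v).trans (G.geo v w)) t) u ≤ dist u v + dist v w := by
  rcases trans_values (G.geo u v) (G.geo v w) t with ⟨s, hs⟩ | ⟨s, hs⟩ <;> rw [hs]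
  · exact le_trans (G.geo_dist u v s) (le_add_of_nonneg_right dist_nonneg)
  · calc dist (G.geo v w s) u ≤ dist (G.geo v w s) v + dist v u := dist_triangle _ _ _
      _ ≤ dist v w + dist v u := by linarith [G.geo_dist v w s]
      _ = dist u v + dist v w := by rw [dist_comm v u]; ring

lemma geo_geo {a c b : X} (h : dist a c + dist c b < S.ε) :
    (⟦(G.geo a c).trans (G.geo c b)⟧ : Path.Homotopic.Quotient a b) = ⟦G.geo a b⟧ := by
  apply S.small
  · intro t
    exact lt_of_le_of_lt (trans_geo_dist G t) h
  · intro t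
    calc dist (G.geo a b t) a ≤ dist a b := G.geo_dist a b t
      _ ≤ dist a c + dist c b := dist_triangle _ _ _
      _ < S.ε := h

variable {b : X}

lemma merge_front {a c : X} (l : List X) (h : dist a c + dist c (l.headD b) < S.ε) :
    (⟦G.poly a (c :: l) b⟧ : Path.Homotopic.Quotient a b) = ⟦G.poly a l b⟧ := by
  cases l with
  | nil => exact geo_geo S G h
  | cons d l' =>
    calc (⟦G.poly a (c :: d :: l') b⟧ : Path.Homotopic.Quotient a b)
        = ⟦((G.geo a c).trans (G.geo c d)).trans (G.poly d l' b)⟧ :=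
          (quot_assoc _ _ _).symm
      _ = ⟦(G.geo a d).trans (G.poly d l' b)⟧ :=
          quot_trans_congr (geo_geo S G h) rfl
      _ = ⟦G.poly a (d :: l') b⟧ := rfl

lemma exists_merge : ∀ (l : List X) (a : X), edgesLt S.e a l b → ¬ Reduced S.e a l b →
    ∃ l' : List X, l'.length + 1 = l.length ∧ edgesLt S.e a l' b ∧
      dSum a l' b ≤ dSum a l b ∧
      (⟦G.poly a l b⟧ : Path.Homotopic.Quotient a b) = ⟦G.poly a l' b⟧ := by
  intro l
  induction l with
  | nil => intro a _ hred; exact absurd (reduced_nil _ _) hred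
  | cons c l ih =>
    intro a hE hred
    by_cases hd : dist a (l.headD b) < S.e
    · refine ⟨l, by simp, ?_, ?_, ?_⟩
      · cases l with
        | nil => exact hd
        | cons d l' => exact ⟨hd, hE.2.2⟩
      · cases l with
        | nil =>
          simp only [dSum_nil, dSum_cons]
          linarith [dist_triangle a c b]
        | cons d l' =>
          simp only [dSum_cons]
          linarith [dist_triangle a c d]
      · apply merge_front
        have hcd : dist c (l.headD b) < S.e := by
          cases l with
          | nil => exact hE.2
          | cons d l' => exact hE.2.1
        have := S.eps_eq
        have := S.e_pos
        linarith [hE.1]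
    · have hskip : S.e ≤ dist a (l.headD b) := not_lt.mp hd
      have hnred : ¬ Reduced S.e c l b := fun hh => hred ⟨hskip, hh⟩
      obtain ⟨l', hlen, hE', hsum, hcls⟩ := ih c hE.2 hnred
      refine ⟨c :: l', by simpa using hlen, ⟨hE.1, hE'⟩, ?_, ?_⟩
      · simp only [dSum_cons]
        linarith
      · calc (⟦G.poly a (c :: l) b⟧ : Path.Homotopic.Quotient a b)
            = ⟦(G.geo a c).trans (G.poly c l b)⟧ := rfl
          _ = ⟦(G.geo a c).trans (G.poly c l' b)⟧ := quot_trans_congr rfl hcls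
          _ = ⟦G.poly a (c :: l') b⟧ := rfl

lemma exists_reduce : ∀ (n : ℕ) (l : List X) (a : X), l.length ≤ n → edgesLt S.e a l b →
    ∃ l' : List X, l'.length ≤ l.length ∧ Reduced S.e a l' b ∧ edgesLt S.e a l' b ∧
      dSum a l' b ≤ dSum a l b ∧
      (⟦G.poly a l b⟧ : Path.Homotopic.Quotient a b) = ⟦G.poly a l' b⟧ := by
  intro n
  induction n with
  | zero =>
    intro l a hl hE
    have : l = [] := List.eq_nil_of_length_eq_zero (Nat.le_zero.mp hl)
    subst this
    exact ⟨[], le_rfl, reduced_nil _ _, hE, le_rfl, rfl⟩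
  | succ n ih =>
    intro l a hl hE
    by_cases hred : Reduced S.e a l b
    · exact ⟨l, le_rfl, hred, hE, le_rfl, rfl⟩
    · obtain ⟨l₁, hlen, hE₁, hsum₁, hcls₁⟩ := exists_merge S G l a hE hred
      obtain ⟨l', hlen', hred', hE', hsum', hcls'⟩ := ih l₁ a (by omega) hE₁
      exact ⟨l', by omega, hred', hE', le_trans hsum' hsum₁, hcls₁.trans hcls'⟩

lemma append_one_class : ∀ (l : List X) (a : X),
    (⟦G.poly a l b⟧ : Path.Homotopic.Quotient a b) = ⟦G.poly a (l ++ [b]) b⟧ := by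
  intro l
  induction l with
  | nil =>
    intro a
    show (⟦G.geo a b⟧ : Path.Homotopic.Quotient a b) = ⟦(G.geo a b).trans (G.geo b b)⟧
    rw [G.geo_self b]
    exact (quot_trans_refl _).symm
  | cons c l ih =>
    intro a
    exact quot_trans_congr rfl (ih c)

lemma append_one_edges {r : ℝ} (hr : 0 < r) : ∀ (l : List X) (a : X),
    edgesLt r a l b → edgesLt r a (l ++ [b]) b := by
  intro l
  induction l with
  | nil => intro a h; exact ⟨h, by simpa [dist_self] using hr⟩
  | cons c l ih => intro a h; exact ⟨h.1, ih c h.2⟩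

lemma append_one_dSum : ∀ (l : List X) (a : X), dSum a (l ++ [b]) b = dSum a l b := by
  intro l
  induction l with
  | nil => intro a; simp [dist_self]
  | cons c l ih => intro a; simp only [List.cons_append, dSum_cons, ih c]

lemma pad_class : ∀ (m : ℕ) (l : List X) (a : X),
    (⟦G.poly a l b⟧ : Path.Homotopic.Quotient a b) = ⟦G.poly a (l ++ List.replicate m b) b⟧ := by
  intro m
  induction m with
  | zero => intro l a; simp only [List.replicate_zero, List.append_nil]
  | succ m ih =>
    intro l a
    have : l ++ List.replicate (m+1) b = (l ++ [b]) ++ List.replicate m b := by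
      simp [List.replicate_succ]
    rw [this]
    exact (append_one_class G l a).trans (ih (l ++ [b]) a)

lemma pad_edges {r : ℝ} (hr : 0 < r) : ∀ (m : ℕ) (l : List X) (a : X),
    edgesLt r a l b → edgesLt r a (l ++ List.replicate m b) b := by
  intro m
  induction m with
  | zero => intro l a h; simpa using h
  | succ m ih =>
    intro l a h
    have : l ++ List.replicate (m+1) b = (l ++ [b]) ++ List.replicate m b := by
      simp [List.replicate_succ]
    rw [this]
    exact ih (l ++ [b]) a (append_one_edges hr l a h)

lemma pad_dSum : ∀ (m : ℕ) (l : List X) (a : X),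
    dSum a (l ++ List.replicate m b) b = dSum a l b := by
  intro m
  induction m with
  | zero => intro l a; simp
  | succ m ih =>
    intro l a
    have : l ++ List.replicate (m+1) b = (l ++ [b]) ++ List.replicate m b := by
      simp [List.replicate_succ]
    rw [this, ih (l ++ [b]) a, append_one_dSum]

lemma quad {b b' : X} (hbb' : dist b b' < S.e) : ∀ {l l' : List X},
    List.Forall₂ (fun x y => dist x y < S.e) l l' → ∀ {a a' : X}, dist a a' < S.e →
    edgesLt (2*S.e) a l b → edgesLt (2*S.e) a' l' b' →
    (⟦(G.geo a a').trans (G.poly a' l' b')⟧ : Path.Homotopic.Quotient a b')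
      = ⟦(G.poly a l b).trans (G.geo b b')⟧ := by
  have he := S.e_pos
  have heps := S.eps_eq
  intro l l' hll'
  induction hll' with
  | nil =>
    intro a a' haa' hE hE'
    apply S.small
    · intro t
      simp only [poly_nil]
      have h1 : dist a' b' ≤ dist a' a + dist a b + dist b b' := by
        calc dist a' b' ≤ dist a' b + dist b b' := dist_triangle _ _ _
          _ ≤ (dist a' a + dist a b) + dist b b' := by linarith [dist_triangle a' a b]
      have := trans_geo_dist G (u := a) (v := a') (w := b') t
      rw [dist_comm a' a] at h1
      simp only [edgesLt_nil] at hE hE'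
      linarith [trans_geo_dist G (u := a) (v := a') (w := b') t]
    · intro t
      simp only [poly_nil]
      simp only [edgesLt_nil] at hE hE'
      linarith [trans_geo_dist G (u := a) (v := b) (w := b') t]
  | @cons x y l l' hxy htail ih =>
    intro a a' haa' hE hE'
    have hstep : (⟦(G.geo a a').trans (G.geo a' y)⟧ : Path.Homotopic.Quotient a y)
        = ⟦(G.geo a x).trans (G.geo x y)⟧ := by
      apply S.small
      · intro t
        have h1 : dist a' y ≤ dist a' a + dist a x + dist x y := by
          calc dist a' y ≤ dist a' x + dist x y := dist_triangle _ _ _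
            _ ≤ (dist a' a + dist a x) + dist x y := by linarith [dist_triangle a' a x]
        rw [dist_comm a' a] at h1
        linarith [trans_geo_dist G (u := a) (v := a') (w := y) t, hE.1, hE'.1]
      · intro t
        linarith [trans_geo_dist G (u := a) (v := x) (w := y) t, hE.1]
    calc (⟦(G.geo a a').trans (G.poly a' (y :: l') b')⟧ : Path.Homotopic.Quotient a b')
        = ⟦(G.geo a a').trans ((G.geo a' y).trans (G.poly y l' b'))⟧ := rfl
      _ = ⟦((G.geo a a').trans (G.geo a' y)).trans (G.poly y l' b')⟧ :=
          (quot_assoc _ _ _).symm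
      _ = ⟦((G.geo a x).trans (G.geo x y)).trans (G.poly y l' b')⟧ :=
          quot_trans_congr hstep rfl
      _ = ⟦(G.geo a x).trans ((G.geo x y).trans (G.poly y l' b'))⟧ := quot_assoc _ _ _
      _ = ⟦(G.geo a x).trans ((G.poly x l b).trans (G.geo b b'))⟧ :=
          quot_trans_congr rfl (ih hxy hE.2 hE'.2)
      _ = ⟦((G.geo a x).trans (G.poly x l b)).trans (G.geo b b')⟧ := (quot_assoc _ _ _).symm
      _ = ⟦(G.poly a (x :: l) b).trans (G.geo b b')⟧ := rfl

lemma quad_loop {bp : X} {l l' : List X}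
    (hll' : List.Forall₂ (fun x y => dist x y < S.e) l l')
    (hE : edgesLt (2*S.e) bp l bp) (hE' : edgesLt (2*S.e) bp l' bp) :
    (⟦G.poly bp l bp⟧ : Path.Homotopic.Quotient bp bp) = ⟦G.poly bp l' bp⟧ := by
  have h := quad S G (by simpa [dist_self] using S.e_pos) hll'
    (by simpa [dist_self] using S.e_pos) hE hE'
  rw [G.geo_self bp] at h
  rw [quot_refl_trans, quot_trans_refl] at h
  exact h.symm

end Small

section Fine

variable (S : SmallData X) (G : GeoData X) {a b : X}

def FineL (r : ℝ) (f : ℝ → X) : ℝ → List ℝ → ℝ → Prop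
  | u, [], v => u ≤ v ∧ ∀ s ∈ Icc u v, dist (f s) (f u) < r
  | u, c :: l, v => (u ≤ c ∧ ∀ s ∈ Icc u c, dist (f s) (f u) < r) ∧ FineL r f c l v

@[simp] lemma fineL_nil {r : ℝ} {f : ℝ → X} {u v : ℝ} :
    FineL r f u ([] : List ℝ) v ↔ u ≤ v ∧ ∀ s ∈ Icc u v, dist (f s) (f u) < r := Iff.rfl

@[simp] lemma fineL_cons {r : ℝ} {f : ℝ → X} {u c v : ℝ} {l : List ℝ} :
    FineL r f u (c :: l) v ↔
      ((u ≤ c ∧ ∀ s ∈ Icc u c, dist (f s) (f u) < r) ∧ FineL r f c l v) := Iff.rfl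

lemma FineL.le {r : ℝ} {f : ℝ → X} : ∀ {l : List ℝ} {u v : ℝ}, FineL r f u l v → u ≤ v
  | [], u, v, h => h.1
  | c :: l, u, v, h => le_trans h.1.1 (FineL.le h.2)

lemma FineL.mem {r : ℝ} {f : ℝ → X} :
    ∀ {l : List ℝ} {u v : ℝ}, FineL r f u l v → ∀ c ∈ l, u ≤ c ∧ c ≤ v := by
  intro l
  induction l with
  | nil => intro u v _ c hc; exact absurd hc List.not_mem_nil
  | cons d l ih =>
    intro u v h c hc
    rcases List.mem_cons.mp hc with rfl | hc
    · exact ⟨h.1.1, FineL.le h.2⟩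
    · obtain ⟨h1, h2⟩ := ih h.2 c hc
      exact ⟨le_trans h.1.1 h1, h2⟩

lemma FineL.congr {r : ℝ} {f g : ℝ → X} :
    ∀ {l : List ℝ} {u v : ℝ}, FineL r f u l v → EqOn f g (Icc u v) → FineL r g u l v := by
  intro l
  induction l with
  | nil =>
    intro u v h heq
    refine ⟨h.1, fun s hs => ?_⟩
    rw [← heq hs, ← heq (left_mem_Icc.mpr h.1)]
    exact h.2 s hs
  | cons c l ih =>
    intro u v h heq
    have hcv : c ≤ v := FineL.le h.2
    have huv : u ≤ v := le_trans h.1.1 hcv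
    refine ⟨⟨h.1.1, fun s hs => ?_⟩, ih h.2 (heq.mono (Icc_subset_Icc h.1.1 le_rfl))⟩
    rw [← heq ⟨hs.1, le_trans hs.2 hcv⟩, ← heq (left_mem_Icc.mpr huv)]
    exact h.1.2 s hs

lemma fineL_edges {r : ℝ} {f : ℝ → X} :
    ∀ {l : List ℝ} {u v : ℝ}, FineL r f u l v → edgesLt r (f u) (l.map f) (f v) := by
  intro l
  induction l with
  | nil =>
    intro u v h
    rw [List.map_nil, edgesLt_nil, dist_comm]
    exact h.2 v (right_mem_Icc.mpr h.1)
  | cons c l ih =>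
    intro u v h
    refine ⟨?_, ih h.2⟩
    rw [dist_comm]
    exact h.1.2 c (right_mem_Icc.mpr h.1.1)

lemma fineL_eSum {r : ℝ} {f : ℝ → X} :
    ∀ {l : List ℝ} {u v : ℝ}, FineL r f u l v →
      eSum (f u) (l.map f) (f v) ≤ eVariationOn f (Icc u v) := by
  intro l
  induction l with
  | nil =>
    intro u v h
    exact eVariationOn.edist_le f (left_mem_Icc.mpr h.1) (right_mem_Icc.mpr h.1)
  | cons c l ih =>
    intro u v h
    have hcv : c ≤ v := FineL.le h.2
    have key := eVariationOn.Icc_add_Icc (s := (univ : Set ℝ)) f h.1.1 hcv (mem_univ c)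
    simp only [univ_inter] at key
    rw [List.map_cons, eSum_cons, ← key]
    refine add_le_add ?_ (ih h.2)
    exact eVariationOn.edist_le f (left_mem_Icc.mpr h.1.1) (right_mem_Icc.mpr h.1.1)

/-- first part of a path up to time `t` -/
noncomputable def firstPart (β : Path a b) (t : ℝ) (h0 : 0 ≤ t) (h1 : t ≤ 1) : Path a (β.extend t) where
  toFun s := β.extend (min s t)
  continuous_toFun := β.continuous_extend.comp (continuous_subtype_val.min continuous_const)
  source' := by
    show β.extend (min ((0:I):ℝ) t) = a
    rw [show ((0:I):ℝ) = 0 from rfl, min_eq_left h0, Path.extend_zero]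
  target' := by
    show β.extend (min ((1:I):ℝ) t) = β.extend t
    rw [show ((1:I):ℝ) = 1 from rfl, min_eq_right h1]

/-- second part of a path from time `t` on -/
noncomputable def secondPart (β : Path a b) (t : ℝ) (h0 : 0 ≤ t) (h1 : t ≤ 1) : Path (β.extend t) b where
  toFun s := β.extend (max s t)
  continuous_toFun := β.continuous_extend.comp (continuous_subtype_val.max continuous_const)
  source' := by
    show β.extend (max ((0:I):ℝ) t) = β.extend t
    rw [show ((0:I):ℝ) = 0 from rfl, max_eq_right h0]
  target' := by
    show β.extend (max ((1:I):ℝ) t) = b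
    rw [show ((1:I):ℝ) = 1 from rfl, max_eq_left h1, Path.extend_one]

lemma trans_parts (β : Path a b) (t : ℝ) (h0 : 0 ≤ t) (h1 : t ≤ 1) :
    (⟦β⟧ : Path.Homotopic.Quotient a b)
      = ⟦(firstPart β t h0 h1).trans (secondPart β t h0 h1)⟧ := by
  have hmem : ∀ s : I, max (min (2*(s:ℝ)) t) (2*(s:ℝ)-1) ∈ (Icc 0 1 : Set ℝ) := by
    intro s
    constructor
    · exact le_trans (le_min (by linarith [s.2.1]) h0) (le_max_left _ _)
    · exact max_le (le_trans (min_le_right _ _) h1) (by linarith [s.2.2])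
  set f : I → I := fun s => ⟨max (min (2*(s:ℝ)) t) (2*(s:ℝ)-1), hmem s⟩ with hfdef
  have hf : Continuous f := by
    apply Continuous.subtype_mk
    exact ((continuous_const.mul continuous_subtype_val).min continuous_const).max
      ((continuous_const.mul continuous_subtype_val).sub continuous_const)
  have hf0 : f 0 = 0 := by
    apply Subtype.ext
    show max (min (2*((0:I):ℝ)) t) (2*((0:I):ℝ)-1) = ((0:I):ℝ)
    rw [Icc.coe_zero]
    rw [mul_zero, min_eq_left h0]
    rw [max_eq_left (by linarith)]
  have hf1 : f 1 = 1 := by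
    apply Subtype.ext
    show max (min (2*((1:I):ℝ)) t) (2*((1:I):ℝ)-1) = ((1:I):ℝ)
    rw [Icc.coe_one, mul_one, min_eq_right (by linarith), show (2:ℝ)-1 = 1 by norm_num,
      max_eq_right h1]
  have heq : (firstPart β t h0 h1).trans (secondPart β t h0 h1) = β.reparam f hf hf0 hf1 := by
    ext s
    rw [Path.trans_apply]
    by_cases hs : (s:ℝ) ≤ 1/2
    · rw [dif_pos hs]
      show β.extend (min (2*(s:ℝ)) t) = β (f s)
      have hmm : min (2*(s:ℝ)) t ∈ (Icc 0 1 : Set ℝ) :=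
        ⟨le_min (by linarith [s.2.1]) h0, le_trans (min_le_right _ _) h1⟩
      rw [Path.extend_apply _ hmm]
      apply congrArg
      apply Subtype.ext
      show min (2*(s:ℝ)) t = max (min (2*(s:ℝ)) t) (2*(s:ℝ)-1)
      rw [max_eq_left]
      exact le_trans (by linarith) (le_min (by linarith [s.2.1]) h0)
    · rw [dif_neg hs]
      push_neg at hs
      show β.extend (max (2*(s:ℝ)-1) t) = β (f s)
      have hmm : max (2*(s:ℝ)-1) t ∈ (Icc 0 1 : Set ℝ) :=
        ⟨le_trans h0 (le_max_right _ _), max_le (by linarith [s.2.2]) h1⟩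
      rw [Path.extend_apply _ hmm]
      apply congrArg
      apply Subtype.ext
      show max (2*(s:ℝ)-1) t = max (min (2*(s:ℝ)) t) (2*(s:ℝ)-1)
      rw [min_eq_right (by linarith), max_comm]
  rw [heq]
  exact Quotient.sound ⟨Path.Homotopy.reparam β f hf hf0 hf1⟩

lemma fineL_shift {r : ℝ} (β : Path a b) (t : ℝ) (h0 : 0 ≤ t) (h1 : t ≤ 1) :
    ∀ {l : List ℝ}, FineL r β.extend t l 1 →
      FineL r (secondPart β t h0 h1).extend 0 l 1 := by
  have hb2 : ∀ (s : ℝ), s ∈ Icc (0:ℝ) 1 →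
      (secondPart β t h0 h1).extend s = β.extend (max s t) := by
    intro s hs
    rw [Path.extend_apply _ hs]
    rfl
  have hb20 : (secondPart β t h0 h1).extend 0 = β.extend t := by
    rw [Path.extend_zero]
  intro l
  induction l with
  | nil =>
    intro h
    refine ⟨zero_le_one, fun s hs => ?_⟩
    rw [hb2 s hs, hb20]
    exact h.2 (max s t) ⟨le_max_right _ _, max_le hs.2 h1⟩
  | cons c l ih =>
    intro h
    have hc1 : c ≤ 1 := FineL.le h.2
    refine ⟨⟨le_trans h0 h.1.1, fun s hs => ?_⟩, ?_⟩
    · rw [hb2 s ⟨hs.1, le_trans hs.2 hc1⟩, hb20]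
      exact h.1.2 (max s t) ⟨le_max_right _ _, max_le hs.2 h.1.1⟩
    · refine FineL.congr h.2 ?_
      intro s hs
      rw [hb2 s ⟨le_trans (le_trans h0 h.1.1) hs.1, hs.2⟩,
        max_eq_left (le_trans h.1.1 hs.1)]

lemma approx {b : X} : ∀ (l : List ℝ) {a : X} (β : Path a b), FineL S.e β.extend 0 l 1 →
    (⟦β⟧ : Path.Homotopic.Quotient a b) = ⟦G.poly a (l.map β.extend) b⟧ := by
  intro l
  induction l with
  | nil =>
    intro a β h
    simp only [List.map_nil, poly_nil]
    apply S.small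
    · intro s
      have : β s = β.extend s := (Path.extend_extends' β s).symm
      rw [this]
      have hmem : (s : ℝ) ∈ Icc (0:ℝ) 1 := s.2
      have := h.2 s hmem
      rw [Path.extend_zero] at this
      have heps := S.eps_eq
      have hepos := S.e_pos
      linarith
    · intro s
      have h1 : dist a b < S.e := by
        have := h.2 1 (right_mem_Icc.mpr zero_le_one)
        rw [Path.extend_zero, Path.extend_one, dist_comm] at this
        exact this
      have heps := S.eps_eq
      have hepos := S.e_pos
      linarith [G.geo_dist a b s]
  | cons t l ih =>
    intro a β h
    have h0t : 0 ≤ t := h.1.1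
    have ht1 : t ≤ 1 := FineL.le h.2
    have step1 := trans_parts β t h0t ht1
    have step2 : (⟦firstPart β t h0t ht1⟧ : Path.Homotopic.Quotient a (β.extend t))
        = ⟦G.geo a (β.extend t)⟧ := by
      apply S.small
      · intro s
        show dist (β.extend (min (s:ℝ) t)) a < S.ε
        have hmm : min (s:ℝ) t ∈ Icc (0:ℝ) t := ⟨le_min s.2.1 h0t, min_le_right _ _⟩
        have := h.1.2 (min (s:ℝ) t) hmm
        rw [Path.extend_zero] at this
        have heps := S.eps_eq
        have hepos := S.e_pos
        linarith
      · intro s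
        have h1 : dist a (β.extend t) < S.e := by
          have := h.1.2 t (right_mem_Icc.mpr h0t)
          rw [Path.extend_zero, dist_comm] at this
          exact this
        have heps := S.eps_eq
        have hepos := S.e_pos
        linarith [G.geo_dist a (β.extend t) s]
    have step3 : (⟦secondPart β t h0t ht1⟧ : Path.Homotopic.Quotient (β.extend t) b)
        = ⟦G.poly (β.extend t) (l.map β.extend) b⟧ := by
      have hfine := fineL_shift β t h0t ht1 h.2
      have := ih (secondPart β t h0t ht1) hfine
      rw [this]
      congr 1
      apply congrArg (fun ll => G.poly (β.extend t) ll b)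
      apply List.map_congr_left
      intro c hc
      obtain ⟨htc, hc1⟩ := FineL.mem h.2 c hc
      rw [Path.extend_apply _ ⟨le_trans h0t htc, hc1⟩]
      show β.extend (max c t) = β.extend c
      rw [max_eq_left htc]
    calc (⟦β⟧ : Path.Homotopic.Quotient a b)
        = ⟦(firstPart β t h0t ht1).trans (secondPart β t h0t ht1)⟧ := step1
      _ = ⟦(G.geo a (β.extend t)).trans (G.poly (β.extend t) (l.map β.extend) b)⟧ :=
          quot_trans_congr step2 step3
      _ = ⟦G.poly a ((t :: l).map β.extend) b⟧ := rfl

lemma exists_fineL (β : Path a b) {r : ℝ} (hr : 0 < r) :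
    ∃ l : List ℝ, FineL r β.extend 0 l 1 := by
  have huc : UniformContinuousOn β.extend (Icc 0 1) :=
    isCompact_Icc.uniformContinuousOn_of_continuous β.continuous_extend.continuousOn
  obtain ⟨δ, hδ, hprop⟩ := Metric.uniformContinuousOn_iff.mp huc r hr
  obtain ⟨n, hn⟩ := exists_nat_one_div_lt hδ
  have hN : (0:ℝ) < (n:ℝ) + 1 := by positivity
  have key : ∀ (m k : ℕ), k + m = n + 1 →
      FineL r β.extend ((k:ℝ)/((n:ℝ)+1))
        ((List.range m).map (fun i => ((k+i+1 : ℕ):ℝ)/((n:ℝ)+1))) 1 := by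
    intro m
    induction m with
    | zero =>
      intro k hk
      have hk' : ((k:ℝ)/((n:ℝ)+1)) = 1 := by
        have : (k:ℝ) = (n:ℝ)+1 := by
          have : k = n + 1 := by omega
          rw [this]; push_cast; ring
        rw [this, div_self (ne_of_gt hN)]
      rw [List.range_zero, List.map_nil, hk']
      refine ⟨le_rfl, fun s hs => ?_⟩
      have : s = 1 := le_antisymm hs.2 hs.1
      rw [this, dist_self]
      exact hr
    | succ m ihm =>
      intro k hk
      have hsucc : (List.range (m+1)).map (fun i => ((k+i+1 : ℕ):ℝ)/((n:ℝ)+1))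
          = (((k+1:ℕ):ℝ)/((n:ℝ)+1)) ::
            (List.range m).map (fun i => (((k+1)+i+1 : ℕ):ℝ)/((n:ℝ)+1)) := by
        rw [List.range_succ_eq_map, List.map_cons, List.map_map]
        congr 1
        apply List.map_congr_left
        intro i _
        show ((k + (i+1) + 1 : ℕ):ℝ)/((n:ℝ)+1) = (((k+1) + i + 1 : ℕ):ℝ)/((n:ℝ)+1)
        congr 2
        omega
      rw [hsucc]
      have hk1 : ((k:ℝ)+1) ≤ (n:ℝ)+1 := by
        have : k + 1 ≤ n + 1 := by omega
        exact_mod_cast this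
      refine ⟨⟨?_, fun s hs => ?_⟩, ?_⟩
      · exact (div_le_div_iff_of_pos_right hN).mpr (by push_cast; linarith)
      · have hu0 : (0:ℝ) ≤ (k:ℝ)/((n:ℝ)+1) := by positivity
        have hc1 : ((k+1:ℕ):ℝ)/((n:ℝ)+1) ≤ 1 := by
          rw [div_le_one hN]
          push_cast
          exact hk1
        have hs01 : s ∈ Icc (0:ℝ) 1 := ⟨le_trans hu0 hs.1, le_trans hs.2 hc1⟩
        have hu01 : (k:ℝ)/((n:ℝ)+1) ∈ Icc (0:ℝ) 1 :=
          ⟨hu0, le_trans ((div_le_div_iff_of_pos_right hN).mpr (by push_cast; linarith)) hc1⟩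
        apply hprop s hs01 _ hu01
        have hdiff : ((k+1:ℕ):ℝ)/((n:ℝ)+1) - (k:ℝ)/((n:ℝ)+1) = 1/((n:ℝ)+1) := by
          push_cast
          field_simp
          ring
        rw [Real.dist_eq, abs_of_nonneg (by linarith [hs.1])]
        calc s - (k:ℝ)/((n:ℝ)+1) ≤ ((k+1:ℕ):ℝ)/((n:ℝ)+1) - (k:ℝ)/((n:ℝ)+1) := by
              linarith [hs.2]
          _ = 1/((n:ℝ)+1) := hdiff
          _ < δ := hn
      · exact ihm (k+1) (by omega)
  have h0 : ((0:ℕ):ℝ)/((n:ℝ)+1) = 0 := by norm_num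
  refine ⟨(List.range (n+1)).map (fun i => ((0+i+1 : ℕ):ℝ)/((n:ℝ)+1)), ?_⟩
  have := key (n+1) 0 (by omega)
  rwa [h0] at this

end Fine

section SLSC

open CategoryTheory

lemma fromPath_eq_one_iff {x : X} {p : Path.Homotopic.Quotient x x} :
    FundamentalGroup.fromPath (X := TopCat.of X) p = 1 ↔ p = ⟦Path.refl x⟧ := by
  constructor
  · intro h
    exact h
  · intro h
    subst h
    rfl

lemma fromPath_toPath {x : X} (g : FundamentalGroup (TopCat.of X) x) :
    FundamentalGroup.fromPath (FundamentalGroup.toPath g) = g := by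
  rfl

variable [CompactSpace X] [Nonempty X]

lemma exists_smallData (G : GeoData X)
    (hslsc : ∀ x : X, ∃ U ∈ nhds x, ∀ β : Path x x, (∀ t, β t ∈ U) →
      FundamentalGroup.fromPath ⟦β⟧ = (1 : FundamentalGroup (TopCat.of X) x)) :
    Nonempty (SmallData X) := by
  have step1 : ∀ x : X, ∃ r : ℝ, 0 < r ∧ ∀ (θ : Path x x),
      (∀ t, θ t ∈ Metric.ball x r) →
      (⟦θ⟧ : Path.Homotopic.Quotient x x) = ⟦Path.refl x⟧ := by
    intro x
    obtain ⟨U, hU, hprop⟩ := hslsc x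
    obtain ⟨r, hr, hball⟩ := Metric.mem_nhds_iff.mp hU
    exact ⟨r, hr, fun θ hθ =>
      fromPath_eq_one_iff.mp (hprop θ (fun t => hball (hθ t)))⟩
  choose r hrpos hrprop using step1
  have hcov : (univ : Set X) ⊆ ⋃ x : X, Metric.ball x (r x / 4) := by
    intro y _
    exact mem_iUnion.mpr ⟨y, Metric.mem_ball_self (by linarith [hrpos y])⟩
  obtain ⟨t, ht⟩ := isCompact_univ.elim_finite_subcover
    (fun x : X => Metric.ball x (r x / 4)) (fun x => Metric.isOpen_ball) hcov
  have htne : t.Nonempty := by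
    obtain ⟨y0⟩ := ‹Nonempty X›
    obtain ⟨x0, hx0, _⟩ := Set.mem_iUnion₂.mp (ht (mem_univ y0))
    exact ⟨x0, hx0⟩
  set ε := t.inf' htne (fun x => r x / 4) with hε
  have hεpos : 0 < ε := by
    rw [hε, Finset.lt_inf'_iff]
    intro x _
    linarith [hrpos x]
  have hloop : ∀ (y : X) (θ : Path y y), (∀ s, dist (θ s) y < ε) →
      (⟦θ⟧ : Path.Homotopic.Quotient y y) = ⟦Path.refl y⟧ := by
    intro y θ hθ
    obtain ⟨x, hx, hyx⟩ := Set.mem_iUnion₂.mp (ht (mem_univ y))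
    have hyx' : dist y x < r x / 4 := Metric.mem_ball.mp hyx
    have hεle : ε ≤ r x / 4 := Finset.inf'_le _ hx
    have hgeo_pt : ∀ s : I, dist (G.geo x y s) x < r x := by
      intro s
      have := G.geo_dist x y s
      have : dist x y < r x / 4 := by rw [dist_comm]; exact hyx'
      linarith [G.geo_dist x y s, hrpos x]
    have hpts : ∀ s, ((G.geo x y).trans (θ.trans (G.geo x y).symm)) s ∈ Metric.ball x (r x) := by
      intro s
      rcases trans_values (G.geo x y) (θ.trans (G.geo x y).symm) s with ⟨u, hu⟩ | ⟨u, hu⟩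
      · rw [hu]; exact hgeo_pt u
      · rw [hu]
        rcases trans_values θ (G.geo x y).symm u with ⟨w, hw⟩ | ⟨w, hw⟩
        · rw [hw]
          have h1 : dist (θ w) y < ε := hθ w
          have : dist (θ w) x ≤ dist (θ w) y + dist y x := dist_triangle _ _ _
          have := hrpos x
          simp only [Metric.mem_ball]
          linarith
        · rw [hw]
          show (G.geo x y) (unitInterval.symm w) ∈ Metric.ball x (r x)
          exact hgeo_pt _
    have hΘ := hrprop x ((G.geo x y).trans (θ.trans (G.geo x y).symm)) hpts
    exact quot_conj hΘ
  refine ⟨⟨ε, hεpos, ?_⟩⟩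
  intro u v α γ hα hγ
  apply quot_cancel
  apply hloop
  intro s
  rcases trans_values α γ.symm s with ⟨w, hw⟩ | ⟨w, hw⟩
  · rw [hw]; exact hα w
  · rw [hw]
    show dist (γ (unitInterval.symm w)) u < ε
    exact hγ _

end SLSC

section Close

variable {b : X}

lemma edgesLt_mono {r r' : ℝ} (hrr' : r ≤ r') :
    ∀ (l : List X) (a : X), edgesLt r a l b → edgesLt r' a l b := by
  intro l
  induction l with
  | nil => intro a h; exact lt_of_lt_of_le h hrr'
  | cons c l ih => intro a h; exact ⟨lt_of_lt_of_le h.1 hrr', ih c h.2⟩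

lemma edgesLt_close {δ rr : ℝ} :
    ∀ {l l' : List X}, List.Forall₂ (fun x y => dist x y < δ) l l' →
      ∀ {a a' b' : X}, dist a a' < δ → dist b b' < δ →
      edgesLt rr a l b → edgesLt (rr + 2*δ) a' l' b' := by
  intro l l' hll'
  induction hll' with
  | nil =>
    intro a a' b' haa' hbb' hE
    simp only [edgesLt_nil] at hE ⊢
    have h1 : dist a' b' ≤ dist a' a + dist a b + dist b b' := by
      calc dist a' b' ≤ dist a' b + dist b b' := dist_triangle _ _ _
        _ ≤ (dist a' a + dist a b) + dist b b' := by linarith [dist_triangle a' a b]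
    rw [dist_comm a' a] at h1
    linarith
  | @cons x y l l' hxy htail ih =>
    intro a a' b' haa' hbb' hE
    refine ⟨?_, ih hxy hbb' hE.2⟩
    have h1 : dist a' y ≤ dist a' a + dist a x + dist x y := by
      calc dist a' y ≤ dist a' x + dist x y := dist_triangle _ _ _
        _ ≤ (dist a' a + dist a x) + dist x y := by linarith [dist_triangle a' a x]
    rw [dist_comm a' a] at h1
    linarith [hE.1]

lemma eSum_close {δ : ℝ} (hδ : 0 ≤ δ) :
    ∀ {l l' : List X}, List.Forall₂ (fun x y => dist x y < δ) l l' →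
      ∀ {a a' b' : X}, dist a a' < δ → dist b b' < δ →
      eSum a' l' b' ≤ eSum a l b + ENNReal.ofReal (2*δ*(l.length+1)) := by
  intro l l' hll'
  induction hll' with
  | nil =>
    intro a a' b' haa' hbb'
    simp only [eSum_nil, List.length_nil]
    have h1 : dist a' b' ≤ dist a b + 2*δ := by
      calc dist a' b' ≤ dist a' a + dist a b + dist b b' := by
            linarith [dist_triangle a' a b', dist_triangle a a b', dist_triangle a' b b',
              dist_triangle a' a b, dist_triangle a b b']
        _ ≤ dist a b + 2*δ := by rw [dist_comm a' a]; linarith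
    calc edist a' b' = ENNReal.ofReal (dist a' b') := edist_dist _ _
      _ ≤ ENNReal.ofReal (dist a b + 2*δ) := ENNReal.ofReal_le_ofReal h1
      _ = ENNReal.ofReal (dist a b) + ENNReal.ofReal (2*δ) :=
          ENNReal.ofReal_add dist_nonneg (by linarith)
      _ = edist a b + ENNReal.ofReal (2*δ*((0:ℕ)+1)) := by
          rw [edist_dist]
          norm_num
  | @cons x y l l' hxy htail ih =>
    intro a a' b' haa' hbb'
    simp only [eSum_cons, List.length_cons]
    have h1 : dist a' y ≤ dist a x + 2*δ := by
      calc dist a' y ≤ dist a' a + dist a x + dist x y := by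
            linarith [dist_triangle a' x y, dist_triangle a' a x]
        _ ≤ dist a x + 2*δ := by rw [dist_comm a' a]; linarith
    have h2 : edist a' y ≤ edist a x + ENNReal.ofReal (2*δ) := by
      calc edist a' y = ENNReal.ofReal (dist a' y) := edist_dist _ _
        _ ≤ ENNReal.ofReal (dist a x + 2*δ) := ENNReal.ofReal_le_ofReal h1
        _ = ENNReal.ofReal (dist a x) + ENNReal.ofReal (2*δ) :=
            ENNReal.ofReal_add dist_nonneg (by linarith)
        _ = edist a x + ENNReal.ofReal (2*δ) := by rw [edist_dist]
    have h3 := ih hxy hbb'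
    have h4 : ENNReal.ofReal (2*δ) + ENNReal.ofReal (2*δ*((l.length:ℝ)+1))
        = ENNReal.ofReal (2*δ*(((l.length:ℝ)+1)+1)) := by
      rw [← ENNReal.ofReal_add (by linarith) (by positivity)]
      congr 1
      ring
    calc edist a' y + eSum y l' b'
        ≤ (edist a x + ENNReal.ofReal (2*δ)) +
          (eSum x l b + ENNReal.ofReal (2*δ*((l.length:ℝ)+1))) := add_le_add h2 h3
      _ = (edist a x + eSum x l b) +
          (ENNReal.ofReal (2*δ) + ENNReal.ofReal (2*δ*((l.length:ℝ)+1))) := by ring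
      _ = edist a x + eSum x l b + ENNReal.ofReal (2*δ*(((l.length:ℝ)+1)+1)) := by rw [h4]
      _ ≤ edist a x + eSum x l b + ENNReal.ofReal (2*δ*((((l.length+1:ℕ)):ℝ)+1)) := by
          push_cast
          exact le_rfl

lemma forall2_ofFn {α : Type*} {R : α → α → Prop} :
    ∀ {n : ℕ} {f g : Fin n → α}, (∀ i, R (f i) (g i)) →
      List.Forall₂ R (List.ofFn f) (List.ofFn g) := by
  intro n
  induction n with
  | zero => intro f g _; simp
  | succ n ih =>
    intro f g h
    rw [List.ofFn_succ, List.ofFn_succ]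
    exact List.Forall₂.cons (h 0) (ih (fun i => h i.succ))

lemma getD_ofFn_self {α : Type*} {M : ℕ} {l : List α} {d : α} (h : l.length = M) :
    List.ofFn (fun i : Fin M => l.getD i d) = l := by
  apply List.ext_getElem
  · simp [h]
  · intro i h1 h2
    simp only [List.getElem_ofFn]
    rw [List.getD_eq_getElem l d (by omega)]

end Close

end Stmt14Aux

open Stmt14Aux

/-- In a compact, semi-locally simply connected geodesic space with basepoint `bp`, every
element of the fundamental group has a representative of finite length, and every nontrivial
element has a representative of minimal (and strictly positive) length among all
representatives. -/
theorem stmt_14 {X : Type*} [MetricSpace X] [CompactSpace X]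
    (hgeo : ∀ x y : X, ∃ γ : ℝ → X, γ 0 = x ∧ γ (dist x y) = y ∧
      ∀ s ∈ Set.Icc 0 (dist x y), ∀ t ∈ Set.Icc 0 (dist x y), dist (γ s) (γ t) = |s - t|)
    (hslsc : ∀ x : X, ∃ U ∈ nhds x, ∀ β : Path x x, (∀ t, β t ∈ U) →
      FundamentalGroup.fromPath ⟦β⟧ = (1 : FundamentalGroup (TopCat.of X) x))
    (bp : X) :
    (∀ g : FundamentalGroup (TopCat.of X) bp, ∃ β : Path bp bp,
      FundamentalGroup.fromPath ⟦β⟧ = g ∧ pathLength β < ⊤) ∧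
    (∀ g : FundamentalGroup (TopCat.of X) bp, g ≠ 1 → ∃ β : Path bp bp,
      FundamentalGroup.fromPath ⟦β⟧ = g ∧ 0 < pathLength β ∧
      ∀ β' : Path bp bp, FundamentalGroup.fromPath ⟦β'⟧ = g →
        pathLength β ≤ pathLength β') := by
  classical
  haveI : Nonempty X := ⟨bp⟩
  set G : GeoData X :=
    { Γ := fun x y => Classical.choose (hgeo x y)
      h0 := fun x y => (Classical.choose_spec (hgeo x y)).1
      h1 := fun x y => (Classical.choose_spec (hgeo x y)).2.1
      hiso := fun x y => (Classical.choose_spec (hgeo x y)).2.2 } with hG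
  obtain ⟨S⟩ := exists_smallData G hslsc
  have polyOf : ∀ (β : Path bp bp), ∃ l : List X, edgesLt S.e bp l bp ∧
      eSum bp l bp ≤ pathLength β ∧
      (⟦β⟧ : Path.Homotopic.Quotient bp bp) = ⟦G.poly bp l bp⟧ := by
    intro β
    obtain ⟨lc, hfine⟩ := exists_fineL β S.e_pos
    refine ⟨lc.map β.extend, ?_, ?_, approx S G lc β hfine⟩
    · have h := fineL_edges hfine
      rwa [Path.extend_zero, Path.extend_one] at h
    · have h := fineL_eSum hfine
      rwa [Path.extend_zero, Path.extend_one, ← pathLength_eq_extend] at h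
  have part1 : ∀ g : FundamentalGroup (TopCat.of X) bp, ∃ β : Path bp bp,
      FundamentalGroup.fromPath ⟦β⟧ = g ∧ pathLength β < ⊤ := by
    intro g
    obtain ⟨β₀, hβ₀⟩ := Quotient.exists_rep (FundamentalGroup.toPath g)
    have hrep : FundamentalGroup.fromPath ⟦β₀⟧ = g := by
      rw [show (⟦β₀⟧ : Path.Homotopic.Quotient bp bp) = FundamentalGroup.toPath g from hβ₀]
    obtain ⟨l, hE, hS, hcls⟩ := polyOf β₀
    exact ⟨G.poly bp l bp, (congrArg FundamentalGroup.fromPath hcls).symm.trans hrep,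
      lt_of_le_of_lt (pathLength_poly_le G l bp) (eSum_lt_top l bp)⟩
  refine ⟨part1, ?_⟩
  intro g hg
  have lower : ∀ β' : Path bp bp, FundamentalGroup.fromPath ⟦β'⟧ = g →
      ENNReal.ofReal S.ε ≤ pathLength β' := by
    intro β' hβ'
    by_contra hlt
    push_neg at hlt
    have hsmall : ∀ t : I, dist (β' t) bp < S.ε := by
      intro t
      have h1 : edist (β'.extend 0) (β'.extend (t:ℝ)) ≤ pathLength β' :=
        edist_le_pathLength β' (left_mem_Icc.mpr zero_le_one) t.2
      rw [Path.extend_zero, Path.extend_extends' β' t] at h1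
      have h2 : edist bp (β' t) < ENNReal.ofReal S.ε := lt_of_le_of_lt h1 hlt
      rw [edist_dist] at h2
      rw [dist_comm]
      exact (ENNReal.ofReal_lt_ofReal_iff S.pos).mp h2
    have hnull := S.small bp bp β' (Path.refl bp) hsmall
      (fun t => by simpa [dist_self] using S.pos)
    exact hg (hβ'.symm.trans (fromPath_eq_one_iff.mpr hnull))
  set L := ⨅ (β' : Path bp bp) (_ : FundamentalGroup.fromPath ⟦β'⟧ = g),
    pathLength β' with hLdef
  obtain ⟨β₁, hβ₁, hfin⟩ := part1 g
  have hLfin : L < ⊤ := lt_of_le_of_lt (iInf₂_le β₁ hβ₁) hfin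
  have hLne : L ≠ ⊤ := hLfin.ne
  have step : ∀ k : ℕ, ∃ l : List X, Reduced S.e bp l bp ∧ edgesLt S.e bp l bp ∧
      eSum bp l bp ≤ L + ENNReal.ofReal (1/((k:ℝ)+1)) ∧
      FundamentalGroup.fromPath (⟦G.poly bp l bp⟧ : Path.Homotopic.Quotient bp bp) = g := by
    intro k
    have hpos : (0:ℝ) < 1/((k:ℝ)+1) := by positivity
    have hlt2 : L < L + ENNReal.ofReal (1/((k:ℝ)+1)) :=
      ENNReal.lt_add_right hLne (ENNReal.ofReal_pos.mpr hpos).ne'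
    rw [hLdef] at hlt2
    obtain ⟨β', hβ'lt⟩ := iInf_lt_iff.mp hlt2
    obtain ⟨hβ'g, hβ'len⟩ := iInf_lt_iff.mp hβ'lt
    rw [← hLdef] at hβ'len
    obtain ⟨l₀, hE₀, hS₀, hcls₀⟩ := polyOf β'
    obtain ⟨l, _, hred, hE, hsum, hcls⟩ :=
      exists_reduce S G l₀.length l₀ bp le_rfl hE₀
    refine ⟨l, hred, hE, ?_, ?_⟩
    · calc eSum bp l bp = ENNReal.ofReal (dSum bp l bp) := eSum_eq_ofReal_dSum l bp
        _ ≤ ENNReal.ofReal (dSum bp l₀ bp) := ENNReal.ofReal_le_ofReal hsum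
        _ = eSum bp l₀ bp := (eSum_eq_ofReal_dSum l₀ bp).symm
        _ ≤ pathLength β' := hS₀
        _ ≤ L + ENNReal.ofReal (1/((k:ℝ)+1)) := le_of_lt hβ'len
    · rw [← congrArg FundamentalGroup.fromPath hcls,
        ← congrArg FundamentalGroup.fromPath hcls₀]
      exact hβ'g
  choose ls hred hEls hsum hcls using step
  have hT : (L+1) ≠ ⊤ := by
    rw [ENNReal.add_ne_top]
    exact ⟨hLne, ENNReal.one_ne_top⟩
  have hdS : ∀ k, dSum bp (ls k) bp ≤ (L+1).toReal := by
    intro k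
    have h1 : ENNReal.ofReal (dSum bp (ls k) bp) ≤ L + 1 := by
      rw [← eSum_eq_ofReal_dSum]
      refine le_trans (hsum k) (add_le_add_right ?_ L)
      calc ENNReal.ofReal (1/((k:ℝ)+1)) ≤ ENNReal.ofReal 1 :=
            ENNReal.ofReal_le_ofReal (by
              rw [div_le_one (by positivity)]
              linarith [Nat.cast_nonneg (α := ℝ) k])
        _ = 1 := ENNReal.ofReal_one
    exact (ENNReal.ofReal_le_iff_le_toReal hT).mp h1
  have hlenR : ∀ k, ((ls k).length : ℝ) ≤ (2*(L+1).toReal + S.e)/S.e := by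
    intro k
    have h := length_le_of_reduced (le_of_lt S.e_pos) ((ls k).length) (ls k) bp
      le_rfl (hred k)
    rw [le_div_iff₀ S.e_pos]
    nlinarith [hdS k, S.e_pos]
  set M := Nat.ceil ((2*(L+1).toReal + S.e)/S.e) with hM
  have hlen : ∀ k, (ls k).length ≤ M := by
    intro k
    have h := (hlenR k).trans (Nat.le_ceil _)
    exact_mod_cast h
  set pl := fun k => ls k ++ List.replicate (M - (ls k).length) bp with hpldef
  have hplen : ∀ k, (pl k).length = M := by
    intro k
    have := hlen k
    simp only [hpldef, List.length_append, List.length_replicate]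
    omega
  have hpE : ∀ k, edgesLt S.e bp (pl k) bp := fun k =>
    pad_edges S.e_pos _ _ _ (hEls k)
  have hpsum : ∀ k, eSum bp (pl k) bp = eSum bp (ls k) bp := by
    intro k
    rw [eSum_eq_ofReal_dSum, eSum_eq_ofReal_dSum, hpldef]
    rw [pad_dSum]
  have hpcls : ∀ k,
      FundamentalGroup.fromPath (⟦G.poly bp (pl k) bp⟧ : Path.Homotopic.Quotient bp bp)
        = g := by
    intro k
    rw [← congrArg FundamentalGroup.fromPath (pad_class G (M - (ls k).length) (ls k) bp)]
    exact hcls k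
  set v : ℕ → Fin M → X := fun k i => (pl k).getD i bp with hv
  obtain ⟨w, -, φ, hφ, hconv⟩ := isCompact_univ.tendsto_subseq
    (fun k => Set.mem_univ (v k))
  set lw := List.ofFn w with hlwdef
  have hofFn : ∀ k, List.ofFn (v k) = pl k := fun k => getD_ofFn_self (hplen k)
  have hco : ∀ δ : ℝ, 0 < δ → ∀ᶠ k in Filter.atTop, ∀ i, dist (v (φ k) i) (w i) < δ := by
    intro δ hδ
    rw [Filter.eventually_all]
    intro i
    have h1 := tendsto_pi_nhds.mp hconv i
    exact Metric.tendsto_nhds.mp h1 δ hδ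
  have hF2 : ∀ (k : ℕ) (δ : ℝ), (∀ i, dist (v k i) (w i) < δ) →
      List.Forall₂ (fun x y => dist x y < δ) (pl k) lw := by
    intro k δ h
    rw [← hofFn k, hlwdef]
    exact forall2_ofFn h
  obtain ⟨k₀, hk₀⟩ := (hco (S.e/2) (by linarith [S.e_pos])).exists
  have hEw : edgesLt (2*S.e) bp lw bp := by
    have h := edgesLt_close (hF2 (φ k₀) _ hk₀)
      (show dist bp bp < S.e/2 by simpa [dist_self] using half_pos S.e_pos)
      (show dist bp bp < S.e/2 by simpa [dist_self] using half_pos S.e_pos)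
      (hpE (φ k₀))
    have h2 : S.e + 2*(S.e/2) = 2*S.e := by ring
    rwa [h2] at h
  have hclsw :
      FundamentalGroup.fromPath (⟦G.poly bp lw bp⟧ : Path.Homotopic.Quotient bp bp) = g := by
    have himp : List.Forall₂ (fun x y => dist x y < S.e) (pl (φ k₀)) lw :=
      List.Forall₂.imp (fun a b hab => by linarith [S.e_pos]) (hF2 (φ k₀) _ hk₀)
    have hq := quad_loop S G himp
      (edgesLt_mono (by linarith [S.e_pos]) _ _ (hpE (φ k₀))) hEw
    rw [← congrArg FundamentalGroup.fromPath hq]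
    exact hpcls (φ k₀)
  have hSw : eSum bp lw bp ≤ L := by
    apply ENNReal.le_of_forall_pos_le_add
    intro η hη _
    have hηr0 : (0:ℝ) < (η:ℝ) := hη
    set δ0 := (η:ℝ)/(8*((M:ℝ)+1)) with hδ0
    have hδ0pos : 0 < δ0 := by positivity
    obtain ⟨n0, hn0⟩ := exists_nat_one_div_lt (show (0:ℝ) < (η:ℝ)/2 by linarith)
    obtain ⟨k, hk_close, hk_ge⟩ :=
      ((hco δ0 hδ0pos).and (Filter.eventually_ge_atTop n0)).exists
    have h1 : eSum bp lw bp ≤ eSum bp (pl (φ k)) bp +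
        ENNReal.ofReal (2*δ0*(((pl (φ k)).length:ℝ)+1)) := by
      refine eSum_close hδ0pos.le (hF2 (φ k) _ hk_close) ?_ ?_
      · simpa [dist_self] using hδ0pos
      · simpa [dist_self] using hδ0pos
    have h2 : ENNReal.ofReal (2*δ0*(((pl (φ k)).length:ℝ)+1))
        ≤ ENNReal.ofReal ((η:ℝ)/2) := by
      apply ENNReal.ofReal_le_ofReal
      rw [hplen (φ k)]
      have he : 2*δ0*(((M:ℕ):ℝ)+1) = (η:ℝ)/4 := by
        rw [hδ0]
        field_simp
        ring
      rw [he]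
      linarith
    have h3 : eSum bp (pl (φ k)) bp ≤ L + ENNReal.ofReal ((η:ℝ)/2) := by
      rw [hpsum]
      refine le_trans (hsum (φ k)) (add_le_add_right ?_ L)
      apply ENNReal.ofReal_le_ofReal
      have hkφ : (k:ℝ) ≤ (φ k : ℝ) := by exact_mod_cast hφ.le_apply
      have hn0k : ((n0:ℝ)) ≤ (k:ℝ) := by exact_mod_cast hk_ge
      calc 1/((φ k:ℝ)+1) ≤ 1/((n0:ℝ)+1) := by
            apply one_div_le_one_div_of_le (by positivity)
            linarith
        _ ≤ (η:ℝ)/2 := le_of_lt hn0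
    calc eSum bp lw bp
        ≤ (L + ENNReal.ofReal ((η:ℝ)/2)) + ENNReal.ofReal ((η:ℝ)/2) :=
          le_trans h1 (add_le_add h3 h2)
      _ = L + (ENNReal.ofReal ((η:ℝ)/2) + ENNReal.ofReal ((η:ℝ)/2)) := by
          rw [add_assoc]
      _ = L + ENNReal.ofReal ((η:ℝ)) := by
          rw [← ENNReal.ofReal_add (by linarith) (by linarith)]
          norm_num
      _ = L + η := by rw [ENNReal.ofReal_coe_nnreal]
  refine ⟨G.poly bp lw bp, hclsw, ?_, ?_⟩
  · exact lt_of_lt_of_le (ENNReal.ofReal_pos.mpr S.pos) (lower _ hclsw)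
  · intro β' hβ'
    calc pathLength (G.poly bp lw bp) ≤ eSum bp lw bp := pathLength_poly_le G lw bp
      _ ≤ L := hSw
      _ ≤ pathLength β' := iInf₂_le β' hβ'
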